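/- Let π: ℝ^k → (0,∞) be log-concave, X* ∈ ℝ^{n×k}, y ∈ ℝ^n, and w: ℝ^n → [0,∞] nonnegative with h(μ) = inf_z { ½‖μ-z‖² + w(z) }. Then the objective β* ↦ ½‖y - X*β*‖² - h(X*β*) - log π(β*) is a convex function of β* ∈ ℝ^k. -/

import Mathlib

lemma stmt4_aux {n : ℕ} (y z μ : EuclideanSpace ℝ (Fin n)) :
    (1 / 2) * ‖y - μ‖ ^ 2 - (1 / 2) * ‖μ - z‖ ^ 2
      = (1 / 2) * ‖y‖ ^ 2 - (1 / 2) * ‖z‖ ^ 2 + inner ℝ μ (z - y) := by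
  rw [norm_sub_sq_real y μ, norm_sub_sq_real μ z, inner_sub_right,
    real_inner_comm y μ]
  ring

/-- Convexity of the negative log of the approximate selection-adjusted posterior:
for a log-concave positive prior `π`, a linear map `X*` and a nonnegative `w` with
`h(μ) = inf_z (½‖μ-z‖² + w z)`, the map
`β ↦ ½‖y - X*β‖² - h(X*β) - log π(β)` is convex. -/
theorem stmt4 {n k : ℕ} (π : EuclideanSpace ℝ (Fin k) → ℝ) (hπ : ∀ b, 0 < π b)
    (hlc : ConcaveOn ℝ Set.univ (fun b => Real.log (π b)))
    (X : EuclideanSpace ℝ (Fin k) →ₗ[ℝ] EuclideanSpace ℝ (Fin n))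
    (y : EuclideanSpace ℝ (Fin n))
    (w : EuclideanSpace ℝ (Fin n) → ℝ) (hw : ∀ z, 0 ≤ w z) :
    ConvexOn ℝ Set.univ
      (fun β => (1 / 2) * ‖y - X β‖ ^ 2
        - (⨅ z, ((1 / 2) * ‖X β - z‖ ^ 2 + w z)) - Real.log (π β)) := by
  have hbdd : ∀ β : EuclideanSpace ℝ (Fin k),
      BddBelow (Set.range fun z => (1 / 2) * ‖X β - z‖ ^ 2 + w z) := by
    intro β
    refine ⟨0, ?_⟩
    rintro _ ⟨z, rfl⟩
    have := hw z
    positivity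
  refine ⟨convex_univ, ?_⟩
  intro β₁ _ β₂ _ a b ha hb hab
  set c := a • β₁ + b • β₂ with hc
  simp only [smul_eq_mul]
  -- log part
  have hlog : a * Real.log (π β₁) + b * Real.log (π β₂) ≤ Real.log (π c) := by
    have := hlc.2 (Set.mem_univ β₁) (Set.mem_univ β₂) ha hb hab
    simpa using this
  -- quadratic part
  set I : EuclideanSpace ℝ (Fin k) → ℝ :=
    fun β => ⨅ z, ((1 / 2) * ‖X β - z‖ ^ 2 + w z) with hI
  have hXc : X c = a • X β₁ + b • X β₂ := by
    simp [hc, map_add, map_smul]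
  have hmain : (1 / 2) * ‖y - X c‖ ^ 2 - I c
      ≤ a * ((1 / 2) * ‖y - X β₁‖ ^ 2 - I β₁)
        + b * ((1 / 2) * ‖y - X β₂‖ ^ 2 - I β₂) := by
    have key : ∀ z, (1 / 2) * ‖y - X c‖ ^ 2
        - (a * ((1 / 2) * ‖y - X β₁‖ ^ 2 - I β₁)
          + b * ((1 / 2) * ‖y - X β₂‖ ^ 2 - I β₂))
        ≤ (1 / 2) * ‖X c - z‖ ^ 2 + w z := by
      intro z
      -- each I βᵢ ≤ quadratic at z
      have h1 : I β₁ ≤ (1 / 2) * ‖X β₁ - z‖ ^ 2 + w z := ciInf_le (hbdd β₁) z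
      have h2 : I β₂ ≤ (1 / 2) * ‖X β₂ - z‖ ^ 2 + w z := ciInf_le (hbdd β₂) z
      -- affine identity
      have e1 := stmt4_aux y z (X β₁)
      have e2 := stmt4_aux y z (X β₂)
      have ec := stmt4_aux y z (X c)
      have hin : (inner ℝ (X c) (z - y) : ℝ)
          = a * inner ℝ (X β₁) (z - y) + b * inner ℝ (X β₂) (z - y) := by
        rw [hXc, inner_add_left, real_inner_smul_left, real_inner_smul_left]
      have haff : (1 / 2) * ‖y - X c‖ ^ 2 - (1 / 2) * ‖X c - z‖ ^ 2
          = a * ((1 / 2) * ‖y - X β₁‖ ^ 2 - (1 / 2) * ‖X β₁ - z‖ ^ 2)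
            + b * ((1 / 2) * ‖y - X β₂‖ ^ 2 - (1 / 2) * ‖X β₂ - z‖ ^ 2) := by
        rw [ec, e1, e2, hin]
        linear_combination (-((1 / 2) * ‖y‖ ^ 2 - (1 / 2) * ‖z‖ ^ 2)) * hab
      have H1 := mul_le_mul_of_nonneg_left h1 ha
      have H2 := mul_le_mul_of_nonneg_left h2 hb
      rw [mul_add] at H1 H2
      rw [mul_sub, mul_sub] at haff
      have hww : a * w z + b * w z = w z := by rw [← add_mul, hab, one_mul]
      rw [mul_sub a, mul_sub b]
      linarith
    have : (1 / 2) * ‖y - X c‖ ^ 2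
        - (a * ((1 / 2) * ‖y - X β₁‖ ^ 2 - I β₁)
          + b * ((1 / 2) * ‖y - X β₂‖ ^ 2 - I β₂)) ≤ I c :=
      le_ciInf key
    linarith
  linarith
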